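/- Let D be a squarefree product of distinct odd primes, d a positive squarefree divisor of D, and p an odd prime dividing D but not dividing d. Then the equation W² = d + (8D/d)Z⁴ has a solution over Q_p if and only if the Legendre symbol (d/p) = 1. -/

import Mathlib

lemma aux_val (D d p : ℕ) [Fact p.Prime] (hp2 : p ≠ 2)
    (hD : Squarefree D) (hdpos : 0 < d) (hdD : d ∣ D) (hpD : p ∣ D) (hpd : ¬ p ∣ d) :
    padicValNat p (8 * D / d) = 1 := by
  have hp := (Fact.out : p.Prime)
  obtain ⟨e, he⟩ := hdD
  have hm : 8 * D / d = 8 * e := by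
    subst he; rw [show 8 * (d * e) = d * (8 * e) by ring, Nat.mul_div_cancel_left _ hdpos]
  have hDpos : 0 < D := Nat.pos_of_ne_zero hD.ne_zero
  have hepos : 0 < e := by
    rcases Nat.eq_zero_or_pos e with h | h
    · simp [he, h] at hDpos
    · exact h
  have hpe : p ∣ e := (hp.dvd_mul.mp (he ▸ hpD)).resolve_left hpd
  have hcop : Nat.Coprime (p ^ 2) 8 := by
    have : Nat.Coprime p 2 := (Nat.coprime_primes hp Nat.prime_two).mpr hp2
    exact (Nat.Coprime.pow_left 2 (this.pow_right 3 : Nat.Coprime p (2^3)))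
  have hnp2 : ¬ p ^ 2 ∣ 8 * e := by
    intro h
    have : p ^ 2 ∣ e := (Nat.Coprime.dvd_of_dvd_mul_left hcop h)
    have : p * p ∣ D := he ▸ Dvd.dvd.mul_left (by rwa [← pow_two]) d
    exact hp.not_isUnit (hD p this)
  have hm0 : 8 * e ≠ 0 := by positivity
  rw [hm]
  have h1 : 1 ≤ padicValNat p (8 * e) := by
    rw [← padicValNat_dvd_iff_le hm0]; simpa using Dvd.dvd.mul_left hpe 8
  have h2 : ¬ 2 ≤ padicValNat p (8 * e) := by
    rw [← padicValNat_dvd_iff_le hm0]; exact hnp2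
  omega

open Polynomial in
lemma aux_sqrt (p d : ℕ) [Fact p.Prime] (hp2 : p ≠ 2) (hpd : ¬ p ∣ d)
    (h : IsSquare ((d : ZMod p))) : ∃ W : ℚ_[p], W ^ 2 = (d : ℚ_[p]) := by
  have hp := (Fact.out : p.Prime)
  obtain ⟨y, hy⟩ := h
  have hy0 : y ≠ 0 := by
    rintro rfl
    rw [mul_zero] at hy
    exact hpd ((ZMod.natCast_eq_zero_iff d p).mp hy)
  set a : ℤ_[p] := (y.val : ℤ_[p]) with ha
  have hta : PadicInt.toZMod a = y := by
    rw [ha, map_natCast, ZMod.natCast_val, ZMod.cast_id]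
  set F : Polynomial ℤ_[p] := X ^ 2 - C (d : ℤ_[p]) with hF
  have hevala : F.eval a = a ^ 2 - (d : ℤ_[p]) := by simp [hF]
  have hderiv : F.derivative.eval a = 2 * a := by simp [hF]; norm_num
  have hmem : F.eval a ∈ IsLocalRing.maximalIdeal ℤ_[p] := by
    rw [← PadicInt.ker_toZMod, RingHom.mem_ker, hevala, map_sub, map_pow, hta, map_natCast,
      pow_two, ← hy, sub_self]
  have hlt : ‖F.eval a‖ < 1 := by
    rw [IsLocalRing.mem_maximalIdeal, mem_nonunits_iff, PadicInt.isUnit_iff] at hmem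
    exact lt_of_le_of_ne (F.eval a).2 hmem
  have hna : ‖a‖ = 1 := by
    rw [← PadicInt.isUnit_iff]
    by_contra hu
    have : a ∈ IsLocalRing.maximalIdeal ℤ_[p] := by
      rwa [IsLocalRing.mem_maximalIdeal, mem_nonunits_iff]
    rw [← PadicInt.ker_toZMod, RingHom.mem_ker, hta] at this
    exact hy0 this
  have hn2 : ‖(2 : ℤ_[p])‖ = 1 := by
    refine (lt_or_eq_of_le (2 : ℤ_[p]).2).resolve_left ?_
    intro h
    have h2 : ((2 : ℤ) : ℤ_[p]) = (2 : ℤ_[p]) := by push_cast; ring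
    have h' := (PadicInt.norm_int_lt_one_iff_dvd 2).mp (by rw [h2]; exact h)
    have : p ∣ 2 := Int.ofNat_dvd.mp (by exact_mod_cast h')
    exact hp2 ((Nat.prime_dvd_prime_iff_eq hp Nat.prime_two).mp this)
  have hnd : ‖F.derivative.eval a‖ = 1 := by
    rw [hderiv, norm_mul, hn2, hna, one_mul]
  obtain ⟨z, hz, -⟩ := hensels_lemma (F := F) (a := a) (by simp only [Polynomial.coe_aeval_eq_eval]; rw [hnd]; simpa using hlt)
  refine ⟨(z : ℚ_[p]), ?_⟩
  have hz2 : z ^ 2 = (d : ℤ_[p]) := sub_eq_zero.mp (by simpa [hF] using hz)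
  exact_mod_cast congrArg (fun t : ℤ_[p] => (t : ℚ_[p])) hz2

lemma aux_fwd (d p m : ℕ) [Fact p.Prime] (hpd : ¬ p ∣ d)
    (hm : padicValNat p m = 1) (hpm : p ∣ m)
    (W Z : ℚ_[p]) (heq : W ^ 2 = (d : ℚ_[p]) + (m : ℚ_[p]) * Z ^ 4) :
    IsSquare ((d : ZMod p)) := by
  have hp := (Fact.out : p.Prime)
  have hp1 : (1 : ℝ) < p := by exact_mod_cast hp.one_lt
  have hp0 : (0 : ℝ) < p := lt_trans one_pos hp1
  have hd0 : (d : ℚ_[p]) ≠ 0 := by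
    intro h; rw [Nat.cast_eq_zero] at h; exact hpd (h ▸ dvd_zero p)
  have hm0 : (m : ℚ_[p]) ≠ 0 := by
    intro h; rw [Nat.cast_eq_zero] at h; subst h; simp [padicValNat.zero] at hm
  have hnd : ‖(d : ℚ_[p])‖ = 1 := by
    rw [Padic.norm_eq_zpow_neg_valuation hd0, Padic.valuation_natCast,
      padicValNat.eq_zero_of_not_dvd hpd]
    simp
  have hnm : ‖(m : ℚ_[p])‖ = (p : ℝ) ^ (-1 : ℤ) := by
    rw [Padic.norm_eq_zpow_neg_valuation hm0, Padic.valuation_natCast, hm]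
    norm_num
  rcases le_or_gt ‖Z‖ 1 with hZ | hZ
  · -- Z is integral; reduce mod p
    have hsmall : ‖(m : ℚ_[p]) * Z ^ 4‖ < 1 := by
      rw [norm_mul, norm_pow, hnm]
      have h1 : (p : ℝ) ^ (-1 : ℤ) < 1 := by
        rw [zpow_neg_one]
        rw [inv_lt_one_iff₀]; right; exact hp1
      have h2 : ‖Z‖ ^ 4 ≤ 1 := pow_le_one₀ (norm_nonneg Z) hZ
      have h3 : (0:ℝ) < (p : ℝ) ^ (-1 : ℤ) := by positivity
      nlinarith
    have hne : ‖(d : ℚ_[p])‖ ≠ ‖(m : ℚ_[p]) * Z ^ 4‖ := by rw [hnd]; linarith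
    have hW2 : ‖W ^ 2‖ = 1 := by
      rw [heq, Padic.add_eq_max_of_ne hne, hnd, max_eq_left (le_of_lt hsmall)]
    have hW : ‖W‖ = 1 := by
      rw [norm_pow] at hW2
      have := norm_nonneg W
      nlinarith
    set W' : ℤ_[p] := ⟨W, le_of_eq hW⟩ with hW'
    set Z' : ℤ_[p] := ⟨Z, hZ⟩ with hZ'
    have heq' : W' ^ 2 = (d : ℤ_[p]) + (m : ℤ_[p]) * Z' ^ 4 := by
      apply Subtype.ext
      push_cast
      exact heq
    have := congrArg (PadicInt.toZMod) heq'
    rw [map_pow, map_add, map_mul, map_pow, map_natCast, map_natCast,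
      (ZMod.natCast_eq_zero_iff m p).mpr hpm, zero_mul, add_zero] at this
    exact ⟨PadicInt.toZMod W', by rw [← this]; ring⟩
  · -- |Z| > 1: parity contradiction
    exfalso
    have hZ0 : Z ≠ 0 := by
      intro h; rw [h, norm_zero] at hZ; linarith
    set b : ℤ := Z.valuation with hb
    have hnZ : ‖Z‖ = (p : ℝ) ^ (-b) := Padic.norm_eq_zpow_neg_valuation hZ0
    have hbneg : 0 < -b := by
      have h' : (p : ℝ) ^ (0 : ℤ) < (p : ℝ) ^ (-b) := by rw [zpow_zero]; rwa [hnZ] at hZ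
      exact ((zpow_right_strictMono₀ hp1).lt_iff_lt).mp h'
    have hnmZ : ‖(m : ℚ_[p]) * Z ^ 4‖ = (p : ℝ) ^ (-1 - 4 * b) := by
      rw [norm_mul, norm_pow, hnm, hnZ, ← zpow_natCast ((p:ℝ) ^ (-b)), ← zpow_mul,
        ← zpow_add₀ (ne_of_gt hp0)]
      ring_nf
    have hbig : (1 : ℝ) < (p : ℝ) ^ (-1 - 4 * b) := by
      have := zpow_right_strictMono₀ hp1 (show (0:ℤ) < -1 - 4 * b by omega)
      simpa using this
    have hne : ‖(d : ℚ_[p])‖ ≠ ‖(m : ℚ_[p]) * Z ^ 4‖ := by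
      rw [hnd, hnmZ]; linarith
    have hW2 : ‖W ^ 2‖ = (p : ℝ) ^ (-1 - 4 * b) := by
      rw [heq, Padic.add_eq_max_of_ne hne, hnd, hnmZ, max_eq_right (le_of_lt hbig)]
    have hW0 : W ≠ 0 := by
      intro h
      rw [h] at hW2
      simp at hW2
      have : (0:ℝ) < (p : ℝ) ^ (-1 - 4 * b) := by positivity
      linarith [hW2.symm ▸ this]
    set a : ℤ := W.valuation with haa
    have hnW : ‖W ^ 2‖ = (p : ℝ) ^ (-(2 * a)) := by
      rw [norm_pow, Padic.norm_eq_zpow_neg_valuation hW0, ← zpow_natCast ((p:ℝ) ^ (-a)), ← zpow_mul]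
      ring_nf
    rw [hnW] at hW2
    have := (zpow_right_strictMono₀ hp1).injective hW2
    omega

/-- For `D` a squarefree product of distinct odd primes, `d` a positive squarefree divisor
of `D`, and `p` an odd prime dividing `D` but not `d`, the equation `W² = d + (8D/d)Z⁴`
has a solution in `ℚ_p` iff the Legendre symbol `(d/p) = 1`. -/
theorem stmt_14 (D d p : ℕ) [Fact p.Prime] (hp2 : p ≠ 2)
    (hD : Squarefree D) (hDodd : Odd D) (hDpos : 0 < D)
    (hdpos : 0 < d) (hdD : d ∣ D) (hpD : p ∣ D) (hpd : ¬ p ∣ d) :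
    (∃ W Z : ℚ_[p], W ^ 2 = (d : ℚ_[p]) + ((8 * D / d : ℕ) : ℚ_[p]) * Z ^ 4) ↔
      legendreSym p d = 1 := by
  have hp := (Fact.out : p.Prime)
  have hd0 : (d : ZMod p) ≠ 0 := by
    rw [Ne, ZMod.natCast_eq_zero_iff]; exact hpd
  have hval : padicValNat p (8 * D / d) = 1 := aux_val D d p hp2 hD hdpos hdD hpD hpd
  have hpm : p ∣ 8 * D / d := by
    obtain ⟨e, he⟩ := hdD
    have hm : 8 * D / d = 8 * e := by
      subst he
      rw [show 8 * (d * e) = d * (8 * e) by ring, Nat.mul_div_cancel_left _ hdpos]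
    have hpe : p ∣ e := (hp.dvd_mul.mp (he ▸ hpD)).resolve_left hpd
    rw [hm]
    exact Dvd.dvd.mul_left hpe 8
  constructor
  · rintro ⟨W, Z, heq⟩
    exact (legendreSym.eq_one_iff' p hd0).mpr (aux_fwd d p (8 * D / d) hpd hval hpm W Z heq)
  · intro h
    obtain ⟨W, hW⟩ := aux_sqrt p d hp2 hpd ((legendreSym.eq_one_iff' p hd0).mp h)
    exact ⟨W, 0, by rw [hW]; ring⟩
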